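/- arXiv:1310.5534 — 2 statements merged into one kernel-verified Lean document; each statement's English description precedes it below -/
import Mathlib

section
/- Let each car i pay the congestion tax p_i^c(z,x) = aβ·Σ_{ℓ=1}^{m_{z_i}(x)} g(ℓ), so that U_i(z,x) = ξ_i^c(z_i) + (a·n_{z_i}(z,x)+b) + aβ·Σ_{ℓ=1}^{m_{z_i}(x)} g(ℓ), while trucks have utility V_j(x,z) = ξ_j^t(x_j) + (a·n_{x_j}(z,x)+b) + β(a·n_{x_j}(z,x)+b)·g(m_{x_j}(x)). Then the function Φ(x,z) = Σ_i ξ_i^c(z_i) + Σ_j ξ_j^t(x_j) + Σ_{r∈R} Σ_{k=1}^{n_r(x,z)}(ak+b) + Σ_{r∈R} β(a·n_r(x,z)+b)·Σ_{ℓ=1}^{m_r(x)} g(ℓ) − aβ·Σ_{r∈R} Σ_{ℓ=1}^{m_r(x)} Σ_{k=1}^{ℓ−1} g(k) is an exact potential function for the game. -/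
/-- `n_r(z,x)`: total number of vehicles using interval `r`. -/
def nCount {R : Type*} [DecidableEq R] {N M : ℕ}
    (z : Fin N → R) (x : Fin M → R) (r : R) : ℕ :=
  (Finset.univ.filter fun ℓ => z ℓ = r).card + (Finset.univ.filter fun ℓ => x ℓ = r).card

/-- `m_r(x)`: number of trucks using interval `r`. -/
def mCount {R : Type*} [DecidableEq R] {M : ℕ} (x : Fin M → R) (r : R) : ℕ :=
  (Finset.univ.filter fun ℓ => x ℓ = r).card

/-- Car utility with the congestion tax `p_i^c(z,x) = aβ·Σ_{ℓ=1}^{m_{z_i}(x)} g(ℓ)`: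
`U_i(z,x) = ξ_i^c(z_i) + (a·n_{z_i}(z,x)+b) + aβ·Σ_{ℓ=1}^{m_{z_i}(x)} g(ℓ)`. -/
def carUtax {R : Type*} [DecidableEq R] {N M : ℕ} (a b β : ℝ) (g : ℕ → ℝ)
    (ξc : Fin N → R → ℝ) (i : Fin N) (z : Fin N → R) (x : Fin M → R) : ℝ :=
  ξc i (z i) + (a * (nCount z x (z i) : ℝ) + b)
    + a * β * ∑ ℓ ∈ Finset.Icc 1 (mCount x (z i)), g ℓ

/-- Truck utility `V_j(x,z) = ξ_j^t(x_j) + (a·n_{x_j}(z,x)+b)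
+ β(a·n_{x_j}(z,x)+b)·g(m_{x_j}(x))`. -/
def truckU {R : Type*} [DecidableEq R] {N M : ℕ} (a b β : ℝ) (g : ℕ → ℝ)
    (ξt : Fin M → R → ℝ) (j : Fin M) (x : Fin M → R) (z : Fin N → R) : ℝ :=
  ξt j (x j) + (a * (nCount z x (x j) : ℝ) + b)
    + β * (a * (nCount z x (x j) : ℝ) + b) * g (mCount x (x j))

/-- The candidate potential function of Theorem 1. -/
def Phi {R : Type*} [Fintype R] [DecidableEq R] {N M : ℕ} (a b β : ℝ) (g : ℕ → ℝ)
    (ξc : Fin N → R → ℝ) (ξt : Fin M → R → ℝ)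
    (x : Fin M → R) (z : Fin N → R) : ℝ :=
  (∑ i, ξc i (z i)) + (∑ j, ξt j (x j))
    + (∑ r : R, ∑ k ∈ Finset.Icc 1 (nCount z x r), (a * (k : ℝ) + b))
    + (∑ r : R, β * (a * (nCount z x r : ℝ) + b) * ∑ ℓ ∈ Finset.Icc 1 (mCount x r), g ℓ)
    - a * β * ∑ r : R, ∑ ℓ ∈ Finset.Icc 1 (mCount x r), ∑ k ∈ Finset.Icc 1 (ℓ - 1), g k

section auxlemmas

variable {α R : Type*} [Fintype α] [DecidableEq α] [DecidableEq R]

lemma filter_update_ne' (z : α → R) (i : α) (c r : R) (h1 : r ≠ c) (h2 : r ≠ z i) :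
    (Finset.univ.filter fun ℓ => Function.update z i c ℓ = r)
      = Finset.univ.filter fun ℓ => z ℓ = r := by
  ext ℓ
  simp only [Finset.mem_filter, Finset.mem_univ, true_and]
  rcases eq_or_ne ℓ i with rfl | hℓ
  · rw [Function.update_self]
    exact ⟨fun h => (h1 h.symm).elim, fun h => (h2 h.symm).elim⟩
  · rw [Function.update_of_ne hℓ]

lemma card_filter_update_old' (z : α → R) (i : α) (c : R) (h : c ≠ z i) :
    (Finset.univ.filter fun ℓ => z ℓ = z i).card
      = (Finset.univ.filter fun ℓ => Function.update z i c ℓ = z i).card + 1 := by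
  have hset : (Finset.univ.filter fun ℓ => z ℓ = z i)
      = insert i (Finset.univ.filter fun ℓ => Function.update z i c ℓ = z i) := by
    ext ℓ
    simp only [Finset.mem_filter, Finset.mem_univ, true_and, Finset.mem_insert]
    rcases eq_or_ne ℓ i with rfl | hℓ
    · simp
    · rw [Function.update_of_ne hℓ]
      simp [hℓ]
  rw [hset, Finset.card_insert_of_notMem]
  simp only [Finset.mem_filter, Finset.mem_univ, true_and, Function.update_self]
  exact h

lemma card_filter_update_new' (z : α → R) (i : α) (c : R) (h : c ≠ z i) :
    (Finset.univ.filter fun ℓ => Function.update z i c ℓ = c).card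
      = (Finset.univ.filter fun ℓ => z ℓ = c).card + 1 := by
  have hset : (Finset.univ.filter fun ℓ => Function.update z i c ℓ = c)
      = insert i (Finset.univ.filter fun ℓ => z ℓ = c) := by
    ext ℓ
    simp only [Finset.mem_filter, Finset.mem_univ, true_and, Finset.mem_insert]
    rcases eq_or_ne ℓ i with rfl | hℓ
    · simp
    · rw [Function.update_of_ne hℓ]
      simp [hℓ]
  rw [hset, Finset.card_insert_of_notMem]
  simp only [Finset.mem_filter, Finset.mem_univ, true_and]
  exact fun hh => h hh.symm

lemma sum_pair_sub {R : Type*} [Fintype R] [DecidableEq R] (f h : R → ℝ) (r0 c : R)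
    (hne : r0 ≠ c) (hoth : ∀ r, r ≠ r0 → r ≠ c → f r = h r) :
    (∑ r, f r) - (∑ r, h r) = (f r0 - h r0) + (f c - h c) := by
  rw [← Finset.sum_sub_distrib]
  rw [← Finset.sum_subset (Finset.subset_univ ({r0, c} : Finset R))
      (fun r _ hr => by
        simp only [Finset.mem_insert, Finset.mem_singleton, not_or] at hr
        rw [hoth r hr.1 hr.2]; ring)]
  rw [Finset.sum_insert (by simp [hne]), Finset.sum_singleton]

lemma sum_comp_update {β : Type*} (f : α → β → ℝ) (z : α → β) (i : α) (c : β) :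
    (∑ k, f k (z k)) - (∑ k, f k (Function.update z i c k)) = f i (z i) - f i c := by
  rw [← Finset.sum_sub_distrib, Finset.sum_eq_single i]
  · rw [Function.update_self]
  · intro k _ hk
    rw [Function.update_of_ne hk]
    ring
  · exact fun h => (h (Finset.mem_univ i)).elim

end auxlemmas

/-- under the car congestion tax, `Φ` is an exact potential function
for the car–truck congestion game. -/
theorem car_tax_gives_potential {R : Type*} [Fintype R] [DecidableEq R] {N M : ℕ}
    (a b β : ℝ) (g : ℕ → ℝ) (ξc : Fin N → R → ℝ) (ξt : Fin M → R → ℝ) :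
    (∀ (i : Fin N) (z : Fin N → R) (x : Fin M → R) (c : R),
      Phi a b β g ξc ξt x z - Phi a b β g ξc ξt x (Function.update z i c)
        = carUtax a b β g ξc i z x - carUtax a b β g ξc i (Function.update z i c) x) ∧
    (∀ (j : Fin M) (x : Fin M → R) (z : Fin N → R) (c : R),
      Phi a b β g ξc ξt x z - Phi a b β g ξc ξt (Function.update x j c) z
        = truckU a b β g ξt j x z - truckU a b β g ξt j (Function.update x j c) z) := by
  constructor
  · -- cars
    intro i z x c
    rcases eq_or_ne c (z i) with rfl | hc
    · rw [Function.update_eq_self]; ring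
    · have hne : z i ≠ c := fun h => hc h.symm
      have hn_ne : ∀ r, r ≠ z i → r ≠ c → nCount (Function.update z i c) x r = nCount z x r := by
        intro r h1 h2
        unfold nCount
        rw [filter_update_ne' z i c r h2 h1]
      have hn_old : nCount z x (z i) = nCount (Function.update z i c) x (z i) + 1 := by
        unfold nCount
        rw [card_filter_update_old' z i c hc]
        omega
      have hn_new : nCount (Function.update z i c) x c = nCount z x c + 1 := by
        unfold nCount
        rw [card_filter_update_new' z i c hc]
        omega
      have hA := sum_comp_update ξc z i c
      have hC : (∑ r : R, ∑ k ∈ Finset.Icc 1 (nCount z x r), (a * (k : ℝ) + b))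
          - (∑ r : R, ∑ k ∈ Finset.Icc 1 (nCount (Function.update z i c) x r), (a * (k : ℝ) + b))
          = (a * ((nCount (Function.update z i c) x (z i) : ℝ) + 1) + b)
            - (a * ((nCount z x c : ℝ) + 1) + b) := by
        refine (sum_pair_sub _ _ (z i) c hne (fun r h1 h2 => by rw [hn_ne r h1 h2])).trans ?_
        rw [hn_old, hn_new,
          Finset.sum_Icc_succ_top (Nat.le_add_left 1 _) (fun k => a * (k : ℝ) + b),
          Finset.sum_Icc_succ_top (Nat.le_add_left 1 _) (fun k => a * (k : ℝ) + b)]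
        push_cast
        ring
      have hD : (∑ r : R, β * (a * (nCount z x r : ℝ) + b) * ∑ ℓ ∈ Finset.Icc 1 (mCount x r), g ℓ)
          - (∑ r : R, β * (a * (nCount (Function.update z i c) x r : ℝ) + b)
              * ∑ ℓ ∈ Finset.Icc 1 (mCount x r), g ℓ)
          = a * β * (∑ ℓ ∈ Finset.Icc 1 (mCount x (z i)), g ℓ)
            - a * β * (∑ ℓ ∈ Finset.Icc 1 (mCount x c), g ℓ) := by
        refine (sum_pair_sub _ _ (z i) c hne (fun r h1 h2 => by rw [hn_ne r h1 h2])).trans ?_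
        rw [hn_old, hn_new]
        push_cast
        ring
      unfold Phi carUtax
      simp only [Function.update_self]
      rw [hn_old, hn_new]
      push_cast
      linear_combination hA + hC + hD
  · -- trucks
    intro j x z c
    rcases eq_or_ne c (x j) with rfl | hc
    · rw [Function.update_eq_self]; ring
    · have hne : x j ≠ c := fun h => hc h.symm
      have hm_ne : ∀ r, r ≠ x j → r ≠ c → mCount (Function.update x j c) r = mCount x r := by
        intro r h1 h2
        unfold mCount
        rw [filter_update_ne' x j c r h2 h1]
      have hn_ne : ∀ r, r ≠ x j → r ≠ c → nCount z (Function.update x j c) r = nCount z x r := by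
        intro r h1 h2
        unfold nCount
        rw [filter_update_ne' x j c r h2 h1]
      have hm_old : mCount x (x j) = mCount (Function.update x j c) (x j) + 1 :=
        card_filter_update_old' x j c hc
      have hm_new : mCount (Function.update x j c) c = mCount x c + 1 :=
        card_filter_update_new' x j c hc
      have hn_old : nCount z x (x j) = nCount z (Function.update x j c) (x j) + 1 := by
        unfold nCount
        rw [card_filter_update_old' x j c hc]
        omega
      have hn_new : nCount z (Function.update x j c) c = nCount z x c + 1 := by
        unfold nCount
        rw [card_filter_update_new' x j c hc]
        omega
      have hB := sum_comp_update ξt x j c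
      have hC : (∑ r : R, ∑ k ∈ Finset.Icc 1 (nCount z x r), (a * (k : ℝ) + b))
          - (∑ r : R, ∑ k ∈ Finset.Icc 1 (nCount z (Function.update x j c) r), (a * (k : ℝ) + b))
          = (a * ((nCount z (Function.update x j c) (x j) : ℝ) + 1) + b)
            - (a * ((nCount z x c : ℝ) + 1) + b) := by
        refine (sum_pair_sub _ _ (x j) c hne (fun r h1 h2 => by rw [hn_ne r h1 h2])).trans ?_
        rw [hn_old, hn_new,
          Finset.sum_Icc_succ_top (Nat.le_add_left 1 _) (fun k => a * (k : ℝ) + b),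
          Finset.sum_Icc_succ_top (Nat.le_add_left 1 _) (fun k => a * (k : ℝ) + b)]
        push_cast
        ring
      have hD : (∑ r : R, β * (a * (nCount z x r : ℝ) + b) * ∑ ℓ ∈ Finset.Icc 1 (mCount x r), g ℓ)
          - (∑ r : R, β * (a * (nCount z (Function.update x j c) r : ℝ) + b)
              * ∑ ℓ ∈ Finset.Icc 1 (mCount (Function.update x j c) r), g ℓ)
          = (β * (a * ((nCount z (Function.update x j c) (x j) : ℝ) + 1) + b)
              * ((∑ ℓ ∈ Finset.Icc 1 (mCount (Function.update x j c) (x j)), g ℓ)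
                  + g (mCount (Function.update x j c) (x j) + 1))
            - β * (a * (nCount z (Function.update x j c) (x j) : ℝ) + b)
              * (∑ ℓ ∈ Finset.Icc 1 (mCount (Function.update x j c) (x j)), g ℓ))
          + (β * (a * (nCount z x c : ℝ) + b) * (∑ ℓ ∈ Finset.Icc 1 (mCount x c), g ℓ)
            - β * (a * ((nCount z x c : ℝ) + 1) + b)
              * ((∑ ℓ ∈ Finset.Icc 1 (mCount x c), g ℓ) + g (mCount x c + 1))) := by
        refine (sum_pair_sub _ _ (x j) c hne
          (fun r h1 h2 => by rw [hn_ne r h1 h2, hm_ne r h1 h2])).trans ?_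
        rw [hn_old, hn_new, hm_old, hm_new,
          Finset.sum_Icc_succ_top (Nat.le_add_left 1 _) g,
          Finset.sum_Icc_succ_top (Nat.le_add_left 1 _) g]
        push_cast
        ring
      have hE : (∑ r : R, ∑ ℓ ∈ Finset.Icc 1 (mCount x r), ∑ k ∈ Finset.Icc 1 (ℓ - 1), g k)
          - (∑ r : R, ∑ ℓ ∈ Finset.Icc 1 (mCount (Function.update x j c) r),
              ∑ k ∈ Finset.Icc 1 (ℓ - 1), g k)
          = (∑ k ∈ Finset.Icc 1 (mCount (Function.update x j c) (x j)), g k)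
            - (∑ k ∈ Finset.Icc 1 (mCount x c), g k) := by
        refine (sum_pair_sub _ _ (x j) c hne
          (fun r h1 h2 => by rw [hm_ne r h1 h2])).trans ?_
        rw [hm_old, hm_new,
          Finset.sum_Icc_succ_top (Nat.le_add_left 1 _) (fun ℓ => ∑ k ∈ Finset.Icc 1 (ℓ - 1), g k),
          Finset.sum_Icc_succ_top (Nat.le_add_left 1 _) (fun ℓ => ∑ k ∈ Finset.Icc 1 (ℓ - 1), g k)]
        simp only [Nat.add_sub_cancel]
        ring
      unfold Phi truckU
      simp only [Function.update_self]
      rw [hn_old, hn_new, hm_old, hm_new]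
      push_cast
      linear_combination hB + hC + hD - a * β * hE
end

section
/- Under the car congestion tax p_i^c(z,x) = aβ·Σ_{ℓ=1}^{m_{z_i}(x)} g(ℓ) (with utilities as in Theorem 1), the car–truck congestion game admits at least one pure strategy Nash equilibrium, i.e., there exists (z*,x*) ∈ R^N × R^M such that no car and no truck can strictly increase its utility by unilaterally changing its time interval. -/
/-- number of cars (or generally players of one vector) at `r`. -/
def cCount {R : Type*} [DecidableEq R] {N : ℕ} (z : Fin N → R) (r : R) : ℕ :=
  (Finset.univ.filter fun ℓ => z ℓ = r).card

lemma count_update {R : Type*} [DecidableEq R] {N : ℕ} (z : Fin N → R) (i : Fin N) (c r : R) :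
    cCount (Function.update z i c) r + (if z i = r then 1 else 0)
      = cCount z r + (if c = r then 1 else 0) := by
  classical
  have h : ∀ w : Fin N → R,
      cCount w r = (if w i = r then 1 else 0) + ∑ ℓ ∈ Finset.univ.erase i, (if w ℓ = r then 1 else 0) := by
    intro w
    rw [cCount, Finset.card_filter]
    exact (Finset.add_sum_erase _ _ (Finset.mem_univ i)).symm
  rw [h, h]
  have he : ∑ ℓ ∈ Finset.univ.erase i, (if Function.update z i c ℓ = r then 1 else 0)
      = ∑ ℓ ∈ Finset.univ.erase i, (if z ℓ = r then 1 else 0) := by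
    apply Finset.sum_congr rfl
    intro ℓ hℓ
    rw [Function.update_of_ne (Finset.ne_of_mem_erase hℓ)]
  rw [he, Function.update_self]
  omega

lemma sum_two_support {α : Type*} [DecidableEq α] {s : Finset α} {p q : α} (f : α → ℝ)
    (hp : p ∈ s) (hq : q ∈ s) (hpq : p ≠ q)
    (h : ∀ c ∈ s, c ≠ p → c ≠ q → f c = 0) :
    ∑ c ∈ s, f c = f p + f q := by
  rw [← Finset.sum_erase_add s f hp]
  have hq' : q ∈ s.erase p := Finset.mem_erase.2 ⟨fun hh => hpq hh.symm, hq⟩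
  rw [← Finset.sum_erase_add _ f hq']
  have : ∑ c ∈ (s.erase p).erase q, f c = 0 := by
    apply Finset.sum_eq_zero
    intro c hc
    have h1 := Finset.mem_erase.1 hc
    have h2 := Finset.mem_erase.1 h1.2
    exact h c h2.2 h2.1 h1.1
  rw [this]; ring

/-- resource-wise potential summand. -/
noncomputable def fpot (a b β : ℝ) (g : ℕ → ℝ) (c m : ℕ) : ℝ :=
  a * ∑ k ∈ Finset.Icc 1 (c + m), (k : ℝ)
    + a * β * (c : ℝ) * ∑ ℓ ∈ Finset.Icc 1 m, g ℓ
    + β * ∑ k ∈ Finset.Icc 1 m, (a * (k : ℝ) + b) * g k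

lemma fpot_succ_c (a b β : ℝ) (g : ℕ → ℝ) (c m : ℕ) :
    fpot a b β g (c + 1) m
      = fpot a b β g c m + (a * ((c : ℝ) + (m : ℝ) + 1) + a * β * ∑ ℓ ∈ Finset.Icc 1 m, g ℓ) := by
  unfold fpot
  have h : c + 1 + m = (c + m) + 1 := by omega
  rw [h, Finset.sum_Icc_succ_top (by omega : 1 ≤ c + m + 1)]
  push_cast
  ring

lemma fpot_succ_m (a b β : ℝ) (g : ℕ → ℝ) (c m : ℕ) :
    fpot a b β g c (m + 1)
      = fpot a b β g c m
        + (a * ((c : ℝ) + (m : ℝ) + 1) + β * (a * ((c : ℝ) + (m : ℝ) + 1) + b) * g (m + 1)) := by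
  unfold fpot
  have h : c + (m + 1) = (c + m) + 1 := by omega
  rw [h, Finset.sum_Icc_succ_top (by omega : 1 ≤ c + m + 1),
    Finset.sum_Icc_succ_top (by omega : 1 ≤ m + 1),
    Finset.sum_Icc_succ_top (by omega : 1 ≤ m + 1)]
  push_cast
  ring

lemma nCount_eq {R : Type*} [DecidableEq R] {N M : ℕ}
    (z : Fin N → R) (x : Fin M → R) (r : R) :
    nCount z x r = cCount z r + mCount x r := rfl

lemma mCount_eq {R : Type*} [DecidableEq R] {M : ℕ} (x : Fin M → R) (r : R) :
    mCount x r = cCount x r := rfl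

/-- the exact potential. -/
noncomputable def pot {R : Type*} [Fintype R] [DecidableEq R] {N M : ℕ}
    (a b β : ℝ) (g : ℕ → ℝ) (ξc : Fin N → R → ℝ) (ξt : Fin M → R → ℝ)
    (z : Fin N → R) (x : Fin M → R) : ℝ :=
  (∑ i, ξc i (z i)) + (∑ j, ξt j (x j)) + ∑ r, fpot a b β g (cCount z r) (mCount x r)

lemma pot_car {R : Type*} [Fintype R] [DecidableEq R] {N M : ℕ}
    (a b β : ℝ) (g : ℕ → ℝ) (ξc : Fin N → R → ℝ) (ξt : Fin M → R → ℝ)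
    (z : Fin N → R) (x : Fin M → R) (i : Fin N) (c : R) :
    pot a b β g ξc ξt (Function.update z i c) x
      = pot a b β g ξc ξt z x
        + (carUtax a b β g ξc i (Function.update z i c) x - carUtax a b β g ξc i z x) := by
  classical
  by_cases hc : c = z i
  · subst hc; rw [Function.update_eq_self]; ring
  set z' := Function.update z i c with hz'
  have hzi : z' i = c := Function.update_self i c z
  have hnew : cCount z' c = cCount z c + 1 := by
    have := count_update z i c c
    rw [← hz'] at this
    rw [if_neg (Ne.symm hc), if_pos rfl] at this; omega
  have hold : cCount z (z i) = cCount z' (z i) + 1 := by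
    have := count_update z i c (z i)
    rw [← hz'] at this
    rw [if_pos rfl, if_neg hc] at this; omega
  have hoth : ∀ r, r ≠ z i → r ≠ c → cCount z' r = cCount z r := by
    intro r h1 h2
    have := count_update z i c r
    rw [← hz'] at this
    rw [if_neg (Ne.symm h1), if_neg (Ne.symm h2)] at this; omega
  have hξ : ∑ ℓ, ξc ℓ (z' ℓ) = (∑ ℓ, ξc ℓ (z ℓ)) + (ξc i c - ξc i (z i)) := by
    have h1 : ∑ ℓ, (ξc ℓ (z' ℓ) - ξc ℓ (z ℓ)) = ξc i c - ξc i (z i) := by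
      rw [Finset.sum_eq_single i]
      · rw [hzi]
      · intro b' _ hb; rw [hz', Function.update_of_ne hb]; ring
      · intro h; exact absurd (Finset.mem_univ i) h
    rw [Finset.sum_sub_distrib] at h1; linarith
  have hF : ∑ r, fpot a b β g (cCount z' r) (mCount x r)
      = (∑ r, fpot a b β g (cCount z r) (mCount x r))
        + ((fpot a b β g (cCount z' (z i)) (mCount x (z i))
              - fpot a b β g (cCount z (z i)) (mCount x (z i)))
          + (fpot a b β g (cCount z' c) (mCount x c)
              - fpot a b β g (cCount z c) (mCount x c))) := by
    have h2 : ∑ r, (fpot a b β g (cCount z' r) (mCount x r)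
          - fpot a b β g (cCount z r) (mCount x r))
        = (fpot a b β g (cCount z' (z i)) (mCount x (z i))
              - fpot a b β g (cCount z (z i)) (mCount x (z i)))
          + (fpot a b β g (cCount z' c) (mCount x c)
              - fpot a b β g (cCount z c) (mCount x c)) := by
      apply sum_two_support _ (Finset.mem_univ _) (Finset.mem_univ _) (Ne.symm hc)
      intro r _ h1 h2
      rw [hoth r h1 h2]; ring
    rw [Finset.sum_sub_distrib] at h2; linarith
  have hA : fpot a b β g (cCount z' c) (mCount x c)
      = fpot a b β g (cCount z c) (mCount x c)
        + (a * ((cCount z c : ℝ) + (mCount x c : ℝ) + 1)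
            + a * β * ∑ ℓ ∈ Finset.Icc 1 (mCount x c), g ℓ) := by
    rw [hnew]; exact fpot_succ_c a b β g _ _
  have hB : fpot a b β g (cCount z (z i)) (mCount x (z i))
      = fpot a b β g (cCount z' (z i)) (mCount x (z i))
        + (a * ((cCount z' (z i) : ℝ) + (mCount x (z i) : ℝ) + 1)
            + a * β * ∑ ℓ ∈ Finset.Icc 1 (mCount x (z i)), g ℓ) := by
    rw [hold]; exact fpot_succ_c a b β g _ _
  have hn1 : ((nCount z' x c : ℕ) : ℝ) = (cCount z c : ℝ) + (mCount x c : ℝ) + 1 := by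
    rw [nCount_eq, hnew]; push_cast; ring
  have hn2 : ((nCount z x (z i) : ℕ) : ℝ)
      = (cCount z' (z i) : ℝ) + (mCount x (z i) : ℝ) + 1 := by
    rw [nCount_eq, hold]; push_cast; ring
  unfold pot carUtax
  rw [hξ, hF, hA, hB, hzi, hn1, hn2]
  ring

lemma mcount_update {R : Type*} [DecidableEq R] {M : ℕ} (x : Fin M → R) (j : Fin M) (c r : R) :
    mCount (Function.update x j c) r + (if x j = r then 1 else 0)
      = mCount x r + (if c = r then 1 else 0) :=
  count_update x j c r

lemma pot_truck {R : Type*} [Fintype R] [DecidableEq R] {N M : ℕ}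
    (a b β : ℝ) (g : ℕ → ℝ) (ξc : Fin N → R → ℝ) (ξt : Fin M → R → ℝ)
    (z : Fin N → R) (x : Fin M → R) (j : Fin M) (c : R) :
    pot a b β g ξc ξt z (Function.update x j c)
      = pot a b β g ξc ξt z x
        + (truckU a b β g ξt j (Function.update x j c) z - truckU a b β g ξt j x z) := by
  classical
  by_cases hc : c = x j
  · subst hc; rw [Function.update_eq_self]; ring
  set x' := Function.update x j c with hx'
  have hxj : x' j = c := Function.update_self j c x
  have hnew : mCount x' c = mCount x c + 1 := by
    have := mcount_update x j c c
    rw [← hx'] at this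
    rw [if_neg (Ne.symm hc), if_pos rfl] at this; omega
  have hold : mCount x (x j) = mCount x' (x j) + 1 := by
    have := mcount_update x j c (x j)
    rw [← hx'] at this
    rw [if_pos rfl, if_neg hc] at this; omega
  have hoth : ∀ r, r ≠ x j → r ≠ c → mCount x' r = mCount x r := by
    intro r h1 h2
    have := mcount_update x j c r
    rw [← hx'] at this
    rw [if_neg (Ne.symm h1), if_neg (Ne.symm h2)] at this; omega
  have hξ : ∑ ℓ, ξt ℓ (x' ℓ) = (∑ ℓ, ξt ℓ (x ℓ)) + (ξt j c - ξt j (x j)) := by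
    have h1 : ∑ ℓ, (ξt ℓ (x' ℓ) - ξt ℓ (x ℓ)) = ξt j c - ξt j (x j) := by
      rw [Finset.sum_eq_single j]
      · rw [hxj]
      · intro b' _ hb; rw [hx', Function.update_of_ne hb]; ring
      · intro h; exact absurd (Finset.mem_univ j) h
    rw [Finset.sum_sub_distrib] at h1; linarith
  have hF : ∑ r, fpot a b β g (cCount z r) (mCount x' r)
      = (∑ r, fpot a b β g (cCount z r) (mCount x r))
        + ((fpot a b β g (cCount z (x j)) (mCount x' (x j))
              - fpot a b β g (cCount z (x j)) (mCount x (x j)))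
          + (fpot a b β g (cCount z c) (mCount x' c)
              - fpot a b β g (cCount z c) (mCount x c))) := by
    have h2 : ∑ r, (fpot a b β g (cCount z r) (mCount x' r)
          - fpot a b β g (cCount z r) (mCount x r))
        = (fpot a b β g (cCount z (x j)) (mCount x' (x j))
              - fpot a b β g (cCount z (x j)) (mCount x (x j)))
          + (fpot a b β g (cCount z c) (mCount x' c)
              - fpot a b β g (cCount z c) (mCount x c)) := by
      apply sum_two_support _ (Finset.mem_univ _) (Finset.mem_univ _) (Ne.symm hc)
      intro r _ h1 h2
      rw [hoth r h1 h2]; ring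
    rw [Finset.sum_sub_distrib] at h2; linarith
  have hA : fpot a b β g (cCount z c) (mCount x' c)
      = fpot a b β g (cCount z c) (mCount x c)
        + (a * ((cCount z c : ℝ) + (mCount x c : ℝ) + 1)
            + β * (a * ((cCount z c : ℝ) + (mCount x c : ℝ) + 1) + b) * g (mCount x c + 1)) := by
    rw [hnew]; exact fpot_succ_m a b β g _ _
  have hB : fpot a b β g (cCount z (x j)) (mCount x (x j))
      = fpot a b β g (cCount z (x j)) (mCount x' (x j))
        + (a * ((cCount z (x j) : ℝ) + (mCount x' (x j) : ℝ) + 1)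
            + β * (a * ((cCount z (x j) : ℝ) + (mCount x' (x j) : ℝ) + 1) + b)
                * g (mCount x' (x j) + 1)) := by
    rw [hold]; exact fpot_succ_m a b β g _ _
  have hn1 : ((nCount z x' c : ℕ) : ℝ) = (cCount z c : ℝ) + (mCount x c : ℝ) + 1 := by
    rw [nCount_eq, hnew]; push_cast; ring
  have hn2 : ((nCount z x (x j) : ℕ) : ℝ)
      = (cCount z (x j) : ℝ) + (mCount x' (x j) : ℝ) + 1 := by
    rw [nCount_eq, hold]; push_cast; ring
  unfold pot truckU
  rw [hξ, hF, hA, hB, hxj, hn1, hn2, hnew, hold]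
  ring

/-- under the car congestion tax of Theorem 1, the car–truck
congestion game admits at least one pure strategy Nash equilibrium. -/
theorem car_tax_pure_nash_exists {R : Type*} [Fintype R] [DecidableEq R] [Nonempty R]
    {N M : ℕ} (a b β : ℝ) (g : ℕ → ℝ) (ξc : Fin N → R → ℝ) (ξt : Fin M → R → ℝ) :
    ∃ (z : Fin N → R) (x : Fin M → R),
      (∀ (i : Fin N) (c : R),
        carUtax a b β g ξc i (Function.update z i c) x ≤ carUtax a b β g ξc i z x) ∧
      (∀ (j : Fin M) (c : R),
        truckU a b β g ξt j (Function.update x j c) z ≤ truckU a b β g ξt j x z) := by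
  classical
  obtain ⟨⟨z, x⟩, hmax⟩ :=
    Finite.exists_max (fun p : (Fin N → R) × (Fin M → R) => pot a b β g ξc ξt p.1 p.2)
  refine ⟨z, x, ?_, ?_⟩
  · intro i c
    have h := hmax (Function.update z i c, x)
    have hp := pot_car a b β g ξc ξt z x i c
    simp only at h
    linarith
  · intro j c
    have h := hmax (z, Function.update x j c)
    have hp := pot_truck a b β g ξc ξt z x j c
    simp only at h
    linarith
end
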